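/- Let ε₁,...,ε_n be independent Rademacher random variables (P(ε_i = ±1) = 1/2), let B be a Banach space with norm ‖·‖ such that for some countable subset D of the unit ball of the dual B', ‖x‖ = sup_{f∈D} |f(x)| for all x ∈ B, and let x₁,...,x_n be arbitrary points in B. Put Z := ‖Σ_{i=1}^n ε_i x_i‖ and σ := sup_{f∈D} √(Σ_{i=1}^n f(x_i)²). Then for every λ > 0, E[e^{λZ}] ≤ 16 exp( λ√(2 E[Z²]) + 4(λσ)² ). -/

import Mathlib

noncomputable section

open MeasureTheory ProbabilityTheory Real
open scoped ENNReal

namespace CorA1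


/-- Young-type inequality: `c v ≤ m eᵛ + c log c − c log m − c` for `c, m > 0`. -/
lemma young2 {c m : ℝ} (v : ℝ) (hc : 0 < c) (hm : 0 < m) :
    c * v ≤ m * Real.exp v + c * Real.log c - c * Real.log m - c := by
  have h := Real.add_one_le_exp (v - Real.log c + Real.log m)
  have h2 := mul_le_mul_of_nonneg_left h hc.le
  have he : Real.exp (v - Real.log c + Real.log m) = Real.exp v * m / c := by
    rw [Real.exp_add, Real.exp_sub, Real.exp_log hc, Real.exp_log hm]; ring
  rw [he] at h2
  have hcc : c * (Real.exp v * m / c) = m * Real.exp v := by field_simp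
  rw [hcc] at h2
  nlinarith

def ent2 (a b : ℝ) : ℝ :=
  (a * Real.log a + b * Real.log b) / 2 - ((a + b) / 2) * Real.log ((a + b) / 2)

lemma ent2_symm (a b : ℝ) : ent2 a b = ent2 b a := by
  unfold ent2; ring_nf

lemma ent2_dual {a b v1 v2 : ℝ} (ha : 0 < a) (hb : 0 < b)
    (hv : Real.exp v1 + Real.exp v2 ≤ 2) :
    a * v1 + b * v2 ≤ 2 * ent2 a b := by
  set m : ℝ := (a + b) / 2 with hm
  have hmpos : 0 < m := by positivity
  have hA := young2 v1 ha hmpos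
  have hB := young2 v2 hb hmpos
  have h2m : m * Real.exp v1 + m * Real.exp v2 ≤ 2 * m := by nlinarith
  have hab : a + b = 2 * m := by rw [hm]; ring
  have h6 : (a + b) * Real.log m = (2 * m) * Real.log m := by rw [hab]
  unfold ent2
  rw [← hm]
  nlinarith [hA, hB, h2m, h6]

lemma ent2_jensen {ι : Type*} [Fintype ι] (p a b : ι → ℝ)
    (hp : ∀ k, 0 ≤ p k) (hs1 : ∑ k, p k = 1)
    (ha : ∀ k, 0 < a k) (hb : ∀ k, 0 < b k) :
    ent2 (∑ k, p k * a k) (∑ k, p k * b k) ≤ ∑ k, p k * ent2 (a k) (b k) := by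
  obtain ⟨k0, hk0⟩ : ∃ k, p k ≠ 0 := by
    by_contra h
    push_neg at h
    simp [h] at hs1
  have hk0' : 0 < p k0 := lt_of_le_of_ne (hp k0) (Ne.symm hk0)
  set A := ∑ k, p k * a k with hA
  set B := ∑ k, p k * b k with hB
  have hApos : 0 < A := by
    have h1 : p k0 * a k0 ≤ A := Finset.single_le_sum
      (fun k _ => mul_nonneg (hp k) (ha k).le) (Finset.mem_univ k0)
    nlinarith [ha k0]
  have hBpos : 0 < B := by
    have h1 : p k0 * b k0 ≤ B := Finset.single_le_sum
      (fun k _ => mul_nonneg (hp k) (hb k).le) (Finset.mem_univ k0)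
    nlinarith [hb k0]
  set M : ℝ := (A + B) / 2 with hM
  have hMpos : 0 < M := by positivity
  set v1 : ℝ := Real.log A - Real.log M with hv1
  set v2 : ℝ := Real.log B - Real.log M with hv2
  have hexp : Real.exp v1 + Real.exp v2 ≤ 2 := by
    rw [hv1, hv2, Real.exp_sub, Real.exp_sub, Real.exp_log hApos, Real.exp_log hBpos,
      Real.exp_log hMpos]
    have hABne : A + B ≠ 0 := by positivity
    rw [hM]
    field_simp
    exact le_refl _

  have hrep : 2 * ent2 A B = A * v1 + B * v2 := by
    unfold ent2
    rw [← hM, hv1, hv2]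
    ring
  have hsum2 : A * v1 + B * v2 = ∑ k, p k * (a k * v1 + b k * v2) := by
    rw [hA, hB, Finset.sum_mul, Finset.sum_mul, ← Finset.sum_add_distrib]
    congr 1; ext k; ring
  have hterm : ∀ k, p k * (a k * v1 + b k * v2) ≤ p k * (2 * ent2 (a k) (b k)) :=
    fun k => mul_le_mul_of_nonneg_left (ent2_dual (ha k) (hb k) hexp) (hp k)
  have hmain : 2 * ent2 A B ≤ ∑ k, p k * (2 * ent2 (a k) (b k)) := by
    rw [hrep, hsum2]
    exact Finset.sum_le_sum fun k _ => hterm k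
  have h2 : ∑ k, p k * (2 * ent2 (a k) (b k)) = 2 * ∑ k, p k * ent2 (a k) (b k) := by
    rw [Finset.mul_sum]
    congr 1; ext k; ring
  linarith [hmain, h2.le]

lemma ent2_exp_le (a b : ℝ) :
    ent2 (Real.exp a) (Real.exp b) ≤ (a - b) * (Real.exp a - Real.exp b) / 4 := by
  unfold ent2
  rw [Real.log_exp, Real.log_exp]
  set m : ℝ := (Real.exp a + Real.exp b) / 2 with hm
  have hmpos : 0 < m := by positivity
  have h1 : m * a ≤ Real.exp a + m * Real.log m - m := by
    have := young2 (c := m) (m := 1) a hmpos one_pos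
    simpa using this
  have h2 : m * b ≤ Real.exp b + m * Real.log m - m := by
    have := young2 (c := m) (m := 1) b hmpos one_pos
    simpa using this
  have heq : Real.exp a + Real.exp b = 2 * m := by rw [hm]; ring
  have h5 : (a + b) * (Real.exp a + Real.exp b) = (a + b) * (2 * m) := by rw [heq]
  nlinarith [h1, h2, h5]

lemma mul_sub_exp_le (a b : ℝ) :
    (a - b) * (Real.exp a - Real.exp b) / 4
      ≤ (max (a - b) 0) ^ 2 * Real.exp a / 4 + (max (b - a) 0) ^ 2 * Real.exp b / 4 := by
  rcases le_total b a with h | h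
  · rw [max_eq_left (by linarith), max_eq_right (by linarith)]
    have key : Real.exp a - Real.exp b ≤ (a - b) * Real.exp a := by
      have h1 := Real.add_one_le_exp (b - a)
      have h2 := mul_le_mul_of_nonneg_left h1 (Real.exp_pos a).le
      rw [← Real.exp_add] at h2
      have h3 : a + (b - a) = b := by ring
      rw [h3] at h2
      nlinarith
    nlinarith [sub_nonneg.2 h, Real.exp_pos b]
  · rw [max_eq_right (by linarith), max_eq_left (by linarith)]
    have key : Real.exp b - Real.exp a ≤ (b - a) * Real.exp b := by
      have h1 := Real.add_one_le_exp (a - b)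
      have h2 := mul_le_mul_of_nonneg_left h1 (Real.exp_pos b).le
      rw [← Real.exp_add] at h2
      have h3 : b + (a - b) = a := by ring
      rw [h3] at h2
      nlinarith
    nlinarith [sub_nonneg.2 h, Real.exp_pos a]

abbrev cube (n : ℕ) := Fin n → Bool

def flip {n : ℕ} (i : Fin n) (s : cube n) : cube n := Function.update s i (!(s i))

lemma flip_flip {n : ℕ} (i : Fin n) (s : cube n) : flip i (flip i s) = s := by
  unfold flip
  rw [Function.update_self, Bool.not_not, Function.update_idem, Function.update_eq_self]

lemma flip_cons_zero {n : ℕ} (b : Bool) (t : cube n) :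
    flip 0 (Fin.cons b t) = Fin.cons (!b) t := by
  unfold flip
  rw [Fin.cons_zero, Fin.update_cons_zero]

lemma flip_cons_succ {n : ℕ} (i : Fin n) (b : Bool) (t : cube n) :
    flip i.succ (Fin.cons b t) = Fin.cons b (flip i t) := by
  unfold flip
  rw [Fin.cons_succ, ← Fin.cons_update]

lemma card_cube (n : ℕ) : Fintype.card (cube n) = 2 ^ n := by
  simp [cube]

lemma sum_cube_succ {M : Type*} [AddCommMonoid M] {n : ℕ} (F : cube (n + 1) → M) :
    ∑ s, F s = (∑ t : cube n, F (Fin.cons false t)) + ∑ t : cube n, F (Fin.cons true t) := by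
  rw [← (Fin.consEquiv (fun _ => Bool)).sum_comp F, Fintype.sum_prod_type, Fintype.sum_bool]
  rw [add_comm]
  rfl

lemma sum_cube_pos {n : ℕ} (U : cube n → ℝ) (hU : ∀ s, 0 < U s) : 0 < ∑ s, U s :=
  Finset.sum_pos (fun s _ => hU s) Finset.univ_nonempty

lemma entropy_tensor (n : ℕ) (U : cube n → ℝ) (hU : ∀ s, 0 < U s) :
    (∑ s, U s * Real.log (U s)) - (∑ s, U s) * Real.log ((∑ s, U s) / 2 ^ n)
      ≤ ∑ i : Fin n, ∑ s, ent2 (U s) (U (flip i s)) := by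
  induction n with
  | zero =>
      rw [pow_zero, div_one]
      simp
  | succ n ih =>
      set Uf : cube n → ℝ := fun t => U (Fin.cons false t) with hUf
      set Ut : cube n → ℝ := fun t => U (Fin.cons true t) with hUt
      have hUfpos : ∀ t, 0 < Uf t := fun t => hU _
      have hUtpos : ∀ t, 0 < Ut t := fun t => hU _
      set Sf := ∑ t, Uf t with hSf
      set St := ∑ t, Ut t with hSt
      have hSfpos : 0 < Sf := sum_cube_pos Uf hUfpos
      have hStpos : 0 < St := sum_cube_pos Ut hUtpos
      have hP : (0:ℝ) < 2 ^ n := by positivity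
      have e2 : ∑ s, U s = Sf + St := sum_cube_succ U
      have e1 : ∑ s, U s * Real.log (U s)
          = (∑ t, Uf t * Real.log (Uf t)) + ∑ t, Ut t * Real.log (Ut t) :=
        sum_cube_succ (fun s => U s * Real.log (U s))
      have ihf := ih Uf hUfpos
      have iht := ih Ut hUtpos
      -- remainder identity
      have hmean : (Sf / 2 ^ n + St / 2 ^ n) / 2 = (Sf + St) / 2 ^ (n + 1) := by
        rw [pow_succ]; field_simp
      have hR : Sf * Real.log (Sf / 2 ^ n) + St * Real.log (St / 2 ^ n)
            - (Sf + St) * Real.log ((Sf + St) / 2 ^ (n + 1))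
          = 2 ^ (n + 1) * ent2 (Sf / 2 ^ n) (St / 2 ^ n) := by
        unfold ent2
        rw [hmean, pow_succ]
        field_simp
      -- Jensen
      have hJ : ent2 (Sf / 2 ^ n) (St / 2 ^ n)
          ≤ ∑ t, (2 ^ n : ℝ)⁻¹ * ent2 (Uf t) (Ut t) := by
        have hpf : Sf / 2 ^ n = ∑ t, (2 ^ n : ℝ)⁻¹ * Uf t := by
          rw [← Finset.mul_sum, div_eq_inv_mul]
        have hpt : St / 2 ^ n = ∑ t, (2 ^ n : ℝ)⁻¹ * Ut t := by
          rw [← Finset.mul_sum, div_eq_inv_mul]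
        rw [hpf, hpt]
        exact ent2_jensen _ _ _ (fun k => by positivity)
          (by
            rw [Finset.sum_const, Finset.card_univ, card_cube, nsmul_eq_mul]
            push_cast
            rw [mul_inv_cancel₀ (by positivity)])
          hUfpos hUtpos
      have hJ2 : (2:ℝ) ^ (n + 1) * ent2 (Sf / 2 ^ n) (St / 2 ^ n)
          ≤ 2 * ∑ t, ent2 (Uf t) (Ut t) := by
        have := mul_le_mul_of_nonneg_left hJ (by positivity : (0:ℝ) ≤ 2 ^ (n + 1))
        calc (2:ℝ) ^ (n + 1) * ent2 (Sf / 2 ^ n) (St / 2 ^ n)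
            ≤ 2 ^ (n + 1) * ∑ t, (2 ^ n : ℝ)⁻¹ * ent2 (Uf t) (Ut t) := this
          _ = 2 * ∑ t, ent2 (Uf t) (Ut t) := by
              have hc : (2:ℝ) ^ (n + 1) * ((2:ℝ) ^ n)⁻¹ = 2 := by
                rw [pow_succ]; field_simp
              rw [Finset.mul_sum, Finset.mul_sum]
              exact Finset.sum_congr rfl fun t _ => by rw [← mul_assoc, hc]
      -- RHS decomposition
      have hRHS : ∑ i : Fin (n + 1), ∑ s, ent2 (U s) (U (flip i s))
          = (2 * ∑ t, ent2 (Uf t) (Ut t))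
            + ((∑ i : Fin n, ∑ t, ent2 (Uf t) (Uf (flip i t)))
              + ∑ i : Fin n, ∑ t, ent2 (Ut t) (Ut (flip i t))) := by
        rw [Fin.sum_univ_succ]
        congr 1
        · rw [sum_cube_succ (fun s => ent2 (U s) (U (flip 0 s)))]
          have hf : ∀ t : cube n, ent2 (U (Fin.cons false t)) (U (flip 0 (Fin.cons false t)))
              = ent2 (Uf t) (Ut t) := by
            intro t; rw [flip_cons_zero]; rfl
          have ht : ∀ t : cube n, ent2 (U (Fin.cons true t)) (U (flip 0 (Fin.cons true t)))
              = ent2 (Uf t) (Ut t) := by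
            intro t; rw [flip_cons_zero]; exact ent2_symm _ _
          rw [Finset.sum_congr rfl (fun t _ => hf t), Finset.sum_congr rfl (fun t _ => ht t)]
          ring
        · rw [← Finset.sum_add_distrib]
          refine Finset.sum_congr rfl fun i _ => ?_
          rw [sum_cube_succ (fun s => ent2 (U s) (U (flip i.succ s)))]
          congr 1
          · refine Finset.sum_congr rfl fun t _ => ?_
            rw [flip_cons_succ]
          · refine Finset.sum_congr rfl fun t _ => ?_
            rw [flip_cons_succ]
      rw [hRHS, e1, e2]
      linarith [ihf, iht, hR, hJ2]

/-- Unnormalized entropy inequality for `U = exp (t z ·)`. -/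
lemma entropy_exp_bound {n : ℕ} (z : cube n → ℝ) (v : ℝ)
    (hv : ∀ s, ∑ i : Fin n, (max (z s - z (flip i s)) 0) ^ 2 ≤ v)
    {t : ℝ} (ht : 0 ≤ t) :
    (∑ s, Real.exp (t * z s) * (t * z s))
      - (∑ s, Real.exp (t * z s)) * Real.log ((∑ s, Real.exp (t * z s)) / 2 ^ n)
      ≤ t ^ 2 * (v / 2) * ∑ s, Real.exp (t * z s) := by
  have h0 := entropy_tensor n (fun s => Real.exp (t * z s)) (fun s => Real.exp_pos _)
  simp only [Real.log_exp] at h0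
  have h1 : ∀ i : Fin n, ∑ s, ent2 (Real.exp (t * z s)) (Real.exp (t * z (flip i s)))
      ≤ ∑ s, t ^ 2 * (max (z s - z (flip i s)) 0) ^ 2 * Real.exp (t * z s) / 2 := by
    intro i
    have h2 : ∀ s : cube n, ent2 (Real.exp (t * z s)) (Real.exp (t * z (flip i s)))
        ≤ (max (t * z s - t * z (flip i s)) 0) ^ 2 * Real.exp (t * z s) / 4
          + (max (t * z (flip i s) - t * z s) 0) ^ 2 * Real.exp (t * z (flip i s)) / 4 :=
      fun s => le_trans (ent2_exp_le _ _) (mul_sub_exp_le _ _)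
    calc ∑ s, ent2 (Real.exp (t * z s)) (Real.exp (t * z (flip i s)))
        ≤ ∑ s, ((max (t * z s - t * z (flip i s)) 0) ^ 2 * Real.exp (t * z s) / 4
          + (max (t * z (flip i s) - t * z s) 0) ^ 2 * Real.exp (t * z (flip i s)) / 4) :=
          Finset.sum_le_sum fun s _ => h2 s
      _ = ∑ s, (max (t * z s - t * z (flip i s)) 0) ^ 2 * Real.exp (t * z s) / 4
          + ∑ s, (max (t * z (flip i s) - t * z s) 0) ^ 2 * Real.exp (t * z (flip i s)) / 4 :=
          Finset.sum_add_distrib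
      _ = ∑ s, (max (t * z s - t * z (flip i s)) 0) ^ 2 * Real.exp (t * z s) / 4
          + ∑ s, (max (t * z s - t * z (flip i s)) 0) ^ 2 * Real.exp (t * z s) / 4 := by
          congr 1
          have hb : Function.Bijective (flip i (n := n)) :=
            Function.Involutive.bijective (flip_flip i)
          rw [← Fintype.sum_bijective _ hb _ _ (fun s => ?_)]
          rw [flip_flip]
      _ = ∑ s, t ^ 2 * (max (z s - z (flip i s)) 0) ^ 2 * Real.exp (t * z s) / 2 := by
          rw [← Finset.sum_add_distrib]
          refine Finset.sum_congr rfl fun s _ => ?_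
          have hmax : max (t * z s - t * z (flip i s)) 0 = t * max (z s - z (flip i s)) 0 := by
            rw [← mul_sub, mul_max_of_nonneg _ _ ht, mul_zero]
          rw [hmax, mul_pow]
          ring
  have h3 : ∑ i : Fin n, ∑ s, ent2 (Real.exp (t * z s)) (Real.exp (t * z (flip i s)))
      ≤ t ^ 2 * (v / 2) * ∑ s, Real.exp (t * z s) := by
    calc ∑ i : Fin n, ∑ s, ent2 (Real.exp (t * z s)) (Real.exp (t * z (flip i s)))
        ≤ ∑ i : Fin n, ∑ s, t ^ 2 * (max (z s - z (flip i s)) 0) ^ 2 * Real.exp (t * z s) / 2 :=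
          Finset.sum_le_sum fun i _ => h1 i
      _ = ∑ s, (t ^ 2 / 2) * (∑ i : Fin n, (max (z s - z (flip i s)) 0) ^ 2)
            * Real.exp (t * z s) := by
          rw [Finset.sum_comm]
          refine Finset.sum_congr rfl fun s _ => ?_
          rw [Finset.mul_sum, Finset.sum_mul]
          refine Finset.sum_congr rfl fun i _ => ?_
          ring
      _ ≤ t ^ 2 * (v / 2) * ∑ s, Real.exp (t * z s) := by
          rw [Finset.mul_sum]
          refine Finset.sum_le_sum fun s _ => ?_
          have := hv s
          have hexp := (Real.exp_pos (t * z s)).le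
          nlinarith [mul_nonneg (mul_nonneg (sq_nonneg t) hexp) (sub_nonneg.2 this)]
  linarith [h0, h3]



theorem cube_mgf {n : ℕ} (z : cube n → ℝ) (v lam : ℝ)
    (hv : ∀ s, ∑ i : Fin n, (max (z s - z (flip i s)) 0) ^ 2 ≤ v)
    (hlam : 0 < lam) :
    ∑ s, ((2:ℝ) ^ n)⁻¹ * Real.exp (lam * z s)
      ≤ Real.exp (lam * (∑ s, ((2:ℝ) ^ n)⁻¹ * z s) + v / 2 * lam ^ 2) := by
  set p : ℝ := ((2:ℝ) ^ n)⁻¹ with hp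
  have hppos : 0 < p := by positivity
  set φ : ℝ → ℝ := fun t => ∑ s, p * Real.exp (t * z s) with hφ
  set dφ : ℝ → ℝ := fun t => ∑ s, p * (Real.exp (t * z s) * z s) with hdφ
  have hφpos : ∀ t, 0 < φ t :=
    fun t => Finset.sum_pos (fun s _ => by positivity) Finset.univ_nonempty
  have hderiv : ∀ t, HasDerivAt φ (dφ t) t := by
    intro t
    have h : ∀ s : cube n, HasDerivAt (fun u => p * Real.exp (u * z s))
        (p * (Real.exp (t * z s) * z s)) t :=
      fun s => ((hasDerivAt_mul_const (z s)).exp).const_mul p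
    exact HasDerivAt.fun_sum (fun s _ => h s)
  have hEnt : ∀ t, 0 ≤ t → t * dφ t - φ t * Real.log (φ t) ≤ t ^ 2 * (v / 2) * φ t := by
    intro t ht
    have h := entropy_exp_bound z v hv ht
    set S : ℝ := ∑ s, Real.exp (t * z s) with hSdef
    have hS : φ t = p * S := by rw [hφ, hSdef, Finset.mul_sum]
    have hTd : t * dφ t = p * ∑ s, Real.exp (t * z s) * (t * z s) := by
      rw [hdφ, Finset.mul_sum, Finset.mul_sum]
      exact Finset.sum_congr rfl fun s _ => by ring
    have hlogeq : Real.log (S / 2 ^ n) = Real.log (φ t) := by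
      rw [hS, div_eq_mul_inv, ← hp, mul_comm]
    have h2 := mul_le_mul_of_nonneg_left h hppos.le
    rw [mul_sub] at h2
    have e3 : p * (S * Real.log (S / 2 ^ n)) = φ t * Real.log (φ t) := by
      rw [hlogeq, hS]; ring
    have e4 : p * (t ^ 2 * (v / 2) * S) = t ^ 2 * (v / 2) * φ t := by
      rw [hS]; ring
    linarith [h2, hTd, e3, e4]
  set K : ℝ → ℝ := fun t => Real.log (φ t) * t⁻¹ with hK
  have hKd : ∀ t : ℝ, 0 < t →
      HasDerivAt K (dφ t / φ t * t⁻¹ + Real.log (φ t) * (-(t ^ 2)⁻¹)) t := by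
    intro t ht
    have hlogd : HasDerivAt (fun u => Real.log (φ u)) (dφ t / φ t) t :=
      (hderiv t).log (hφpos t).ne'
    have hinv : HasDerivAt (fun u : ℝ => u⁻¹) (-(t ^ 2)⁻¹) t := hasDerivAt_inv ht.ne'
    exact hlogd.mul hinv
  have hK'le : ∀ t : ℝ, 0 < t →
      dφ t / φ t * t⁻¹ + Real.log (φ t) * (-(t ^ 2)⁻¹) ≤ v / 2 := by
    intro t ht
    have hE := hEnt t ht.le
    have hq : dφ t / φ t * t⁻¹ + Real.log (φ t) * (-(t ^ 2)⁻¹)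
        = (t * dφ t - φ t * Real.log (φ t)) / (t ^ 2 * φ t) := by
      field_simp
      ring
      rw [mul_inv_cancel₀ (hφpos t).ne', one_mul]
    rw [hq, div_le_iff₀ (by positivity : (0:ℝ) < t ^ 2 * φ t)]
    calc t * dφ t - φ t * Real.log (φ t) ≤ t ^ 2 * (v / 2) * φ t := hE
      _ = v / 2 * (t ^ 2 * φ t) := by ring
  have hgd : ∀ u : ℝ, 0 < u → HasDerivAt (fun w => v / 2 * w - K w)
      (v / 2 - (dφ u / φ u * u⁻¹ + Real.log (φ u) * (-(u ^ 2)⁻¹))) u := by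
    intro u hu
    simpa using ((hasDerivAt_id u).const_mul (v / 2)).fun_sub (hKd u hu)
  have key : ∀ t : ℝ, 0 < t → t < lam → K lam - K t ≤ v / 2 * (lam - t) := by
    intro t ht htl
    have hgmono : MonotoneOn (fun w => v / 2 * w - K w) (Set.Icc t lam) := by
      apply monotoneOn_of_deriv_nonneg (convex_Icc t lam)
      · intro u hu
        have hu0 : 0 < u := lt_of_lt_of_le ht hu.1
        exact ((hgd u hu0).continuousAt).continuousWithinAt
      · intro u hu
        rw [interior_Icc] at hu
        have hu0 : 0 < u := ht.trans hu.1
        exact (hgd u hu0).differentiableAt.differentiableWithinAt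
      · intro u hu
        rw [interior_Icc] at hu
        have hu0 : 0 < u := ht.trans hu.1
        rw [(hgd u hu0).deriv]
        linarith [hK'le u hu0]
    have h := hgmono (Set.left_mem_Icc.2 htl.le) (Set.right_mem_Icc.2 htl.le) htl.le
    simp only at h
    linarith
  have hφ0 : φ 0 = 1 := by
    rw [hφ]
    simp only [zero_mul, Real.exp_zero, mul_one]
    rw [Finset.sum_const, Finset.card_univ, card_cube, nsmul_eq_mul, hp]
    push_cast
    field_simp
  have hlog0 : Real.log (φ 0) = 0 := by rw [hφ0, Real.log_one]
  have hslope : Filter.Tendsto K (nhdsWithin 0 (Set.Ioi 0)) (nhds (dφ 0)) := by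
    have h1 : HasDerivAt (fun u => Real.log (φ u)) (dφ 0 / φ 0) 0 :=
      (hderiv 0).log (hφpos 0).ne'
    rw [hφ0, div_one] at h1
    have h2 := hasDerivAt_iff_tendsto_slope.mp h1
    have h3 : Filter.Tendsto (slope (fun u => Real.log (φ u)) 0) (nhdsWithin 0 (Set.Ioi 0))
        (nhds (dφ 0)) :=
      h2.mono_left (nhdsWithin_mono 0 (fun x hx => ne_of_gt hx))
    refine h3.congr' ?_
    filter_upwards [self_mem_nhdsWithin] with u hu
    have hu0 : u ≠ 0 := ne_of_gt hu
    rw [slope_def_field, hlog0, sub_zero, sub_zero, div_eq_mul_inv]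
  have hev : ∀ᶠ t in nhdsWithin (0:ℝ) (Set.Ioi 0), K lam - v / 2 * (lam - t) ≤ K t := by
    filter_upwards [Ioo_mem_nhdsGT_of_mem (Set.left_mem_Ico.2 hlam)] with t ht'
    have := key t ht'.1 ht'.2
    linarith
  have hlim2 : Filter.Tendsto (fun t : ℝ => K lam - v / 2 * (lam - t))
      (nhdsWithin 0 (Set.Ioi 0)) (nhds (K lam - v / 2 * lam)) := by
    apply Filter.Tendsto.mono_left ?_ nhdsWithin_le_nhds
    have hc : Continuous fun t : ℝ => K lam - v / 2 * (lam - t) :=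
      continuous_const.sub (continuous_const.mul (continuous_const.sub continuous_id))
    simpa using hc.tendsto 0
  have hfinal : K lam - v / 2 * lam ≤ dφ 0 := le_of_tendsto_of_tendsto hlim2 hslope hev
  have hlogK : Real.log (φ lam) = lam * K lam := by
    rw [hK]
    field_simp
  have hlogle : Real.log (φ lam) ≤ lam * dφ 0 + v / 2 * lam ^ 2 := by
    rw [hlogK]
    nlinarith [hfinal]
  have hm : dφ 0 = ∑ s, p * z s := by
    rw [hdφ]
    refine Finset.sum_congr rfl fun s _ => ?_
    rw [zero_mul, Real.exp_zero, one_mul]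
  calc φ lam = Real.exp (Real.log (φ lam)) := (Real.exp_log (hφpos lam)).symm
    _ ≤ Real.exp (lam * (∑ s, p * z s) + v / 2 * lam ^ 2) := by
        rw [← hm]
        exact Real.exp_le_exp.2 hlogle


end CorA1

open CorA1 in

set_option maxHeartbeats 2000000 in
/-- **Corollary A.1.**  Let `ε₁,…,ε_n` be independent Rademacher random
variables, `B` a Banach space whose norm is computed as a supremum
`‖x‖ = sup_{f ∈ D} |f(x)|` over a countable subset `D` of the unit ball of the
dual, and `x₁,…,x_n ∈ B`.  With `Z = ‖∑_i ε_i x_i‖` and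
`σ = sup_{f ∈ D} √(∑_i f(x_i)²)`, for every `λ > 0`,
`E[e^{λZ}] ≤ 16 exp(λ√(2E[Z²]) + 4(λσ)²)`. -/
theorem statement_10 {Ω : Type*} [MeasureSpace Ω]
    [IsProbabilityMeasure (volume : Measure Ω)]
    {B : Type*} [NormedAddCommGroup B] [NormedSpace ℝ B]
    {n : ℕ} (ε : Fin n → Ω → ℝ) (hmeas : ∀ i, Measurable (ε i))
    (hindep : iIndepFun ε volume)
    (hrad : ∀ i, volume {ω | ε i ω = 1} = 1 / 2 ∧ volume {ω | ε i ω = -1} = 1 / 2)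
    (D : Set (B →L[ℝ] ℝ)) (hD : D.Countable) (hDball : ∀ f ∈ D, ‖f‖ ≤ 1)
    (hnorming : ∀ v : B, ‖v‖ = sSup ((fun f : B →L[ℝ] ℝ => |f v|) '' D))
    (x : Fin n → B) (σ : ℝ)
    (hσ : σ = sSup ((fun f : B →L[ℝ] ℝ => Real.sqrt (∑ i, (f (x i)) ^ 2)) '' D))
    (lam : ℝ) (hlam : 0 < lam) :
    (∫⁻ ω, ENNReal.ofReal (Real.exp (lam * ‖∑ i, ε i ω • x i‖)))
      ≤ ENNReal.ofReal (16 * Real.exp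
          (lam * Real.sqrt (2 * ∫ ω, ‖∑ i, ε i ω • x i‖ ^ 2) + 4 * (lam * σ) ^ 2)) := by
  classical
  -- sign patterns
  set r : cube n → Fin n → ℝ := fun s i => if s i then 1 else -1 with hr
  set y : cube n → B := fun s => ∑ i, r s i • x i with hy
  set c : cube n → ℝ := fun s => ‖y s‖ with hc
  set A : cube n → Set Ω := fun s => ⋂ i, ε i ⁻¹' {r s i} with hA
  have hmemA : ∀ s ω, ω ∈ A s ↔ ∀ i, ε i ω = r s i := by
    intro s ω
    simp [hA, Set.mem_iInter]
  have hAmeas : ∀ s, MeasurableSet (A s) :=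
    fun s => MeasurableSet.iInter fun i => (hmeas i) (measurableSet_singleton _)
  -- measure of each atom
  have hAvol : ∀ s, volume (A s) = (2 : ℝ≥0∞)⁻¹ ^ n := by
    intro s
    rw [hA]
    rw [hindep.meas_iInter (fun i => ⟨{r s i}, measurableSet_singleton _, rfl⟩)]
    have hhalf : ∀ i, volume (ε i ⁻¹' {r s i}) = (2 : ℝ≥0∞)⁻¹ := by
      intro i
      have h1 : ε i ⁻¹' {(1:ℝ)} = {ω | ε i ω = 1} := rfl
      have h2 : ε i ⁻¹' {(-1:ℝ)} = {ω | ε i ω = -1} := rfl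
      by_cases hb : s i
      · have hri : r s i = 1 := by rw [hr]; simp [hb]
        rw [hri, h1, (hrad i).1, one_div]
      · have hri : r s i = -1 := by rw [hr]; simp [hb]
        rw [hri, h2, (hrad i).2, one_div]
    rw [Finset.prod_congr rfl (fun i _ => hhalf i), Finset.prod_const, Finset.card_univ,
      Fintype.card_fin]
  -- distinct atoms are disjoint
  have hrne : ∀ {s s' : cube n} {i : Fin n}, s i ≠ s' i → r s i ≠ r s' i := by
    intro s s' i hne
    rw [hr]
    rcases Bool.eq_false_or_eq_true (s i) with h | h <;>
      rcases Bool.eq_false_or_eq_true (s' i) with h' | h' <;>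
        simp_all <;> norm_num
  have hdisj : Pairwise (Function.onFun Disjoint A) := by
    intro s s' hne
    obtain ⟨i, hi⟩ : ∃ i, s i ≠ s' i := by
      by_contra h
      push_neg at h
      exact hne (funext h)
    rw [Function.onFun, Set.disjoint_left]
    intro ω hωs hωs'
    exact hrne hi (((hmemA s ω).1 hωs i).symm.trans ((hmemA s' ω).1 hωs' i))
  -- the atoms cover a.e.
  have hcover : volume (⋃ s, A s) = 1 := by
    rw [measure_iUnion hdisj hAmeas, tsum_fintype]
    rw [Finset.sum_congr rfl (fun s _ => hAvol s), Finset.sum_const, Finset.card_univ]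
    have hcard : Fintype.card (cube n) = 2 ^ n := by simp [cube]
    rw [hcard, nsmul_eq_mul]
    push_cast
    rw [← mul_pow, ENNReal.mul_inv_cancel (by norm_num) (by norm_num), one_pow]
  have hae : ∀ᵐ ω, ω ∈ ⋃ s, A s := by
    have h0 : volume ((⋃ s, A s)ᶜ) = 0 := by
      rw [prob_compl_eq_zero_iff (MeasurableSet.iUnion hAmeas)]
      exact hcover
    rw [MeasureTheory.ae_iff]
    exact h0
  -- value of the sum on each atom
  have hval : ∀ s, ∀ ω ∈ A s, (∑ i, ε i ω • x i) = y s := by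
    intro s ω hω
    rw [hy]
    exact Finset.sum_congr rfl fun i _ => by rw [(hmemA s ω).1 hω i]
  have hunique : ∀ ω s s', ω ∈ A s → ω ∈ A s' → s = s' := by
    intro ω s s' h h'
    by_contra hne
    exact (Set.disjoint_left.1 (hdisj hne)) h h'
  -- P : the real weight
  set P : ℝ := ((2:ℝ) ^ n)⁻¹ with hP
  have hPvol : ∀ s, volume (A s) = ENNReal.ofReal P := by
    intro s
    have h2' : ENNReal.ofReal (2:ℝ) = 2 := by norm_num
    rw [hAvol s, hP, ENNReal.ofReal_inv_of_pos (by positivity),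
      ENNReal.ofReal_pow (by norm_num), h2', ENNReal.inv_pow]
  have hPtoReal : ∀ s, (volume (A s)).toReal = P := by
    intro s
    rw [hPvol s, ENNReal.toReal_ofReal (by positivity)]
  -- (I) the lintegral identity
  have hL : (∫⁻ ω, ENNReal.ofReal (Real.exp (lam * ‖∑ i, ε i ω • x i‖)))
      = ENNReal.ofReal (∑ s, P * Real.exp (lam * c s)) := by
    have hcongr : (fun ω => ENNReal.ofReal (Real.exp (lam * ‖∑ i, ε i ω • x i‖)))
        =ᵐ[volume] fun ω => ∑ s, Set.indicator (A s)
          (fun _ => ENNReal.ofReal (Real.exp (lam * c s))) ω := by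
      filter_upwards [hae] with ω hω
      obtain ⟨s, hs⟩ := Set.mem_iUnion.mp hω
      rw [Finset.sum_eq_single s]
      · rw [Set.indicator_of_mem hs, hval s ω hs]
      · intro s' _ hne
        rw [Set.indicator_of_notMem]
        intro hmem
        exact hne (hunique ω s' s hmem hs)
      · intro habs
        exact absurd (Finset.mem_univ s) habs
    rw [lintegral_congr_ae hcongr, lintegral_finset_sum]
    · have : ∀ s : cube n, (∫⁻ ω, Set.indicator (A s)
          (fun _ => ENNReal.ofReal (Real.exp (lam * c s))) ω)
          = ENNReal.ofReal (Real.exp (lam * c s)) * volume (A s) := by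
        intro s
        rw [lintegral_indicator_const (hAmeas s)]
      rw [Finset.sum_congr rfl fun s _ => this s]
      rw [ENNReal.ofReal_sum_of_nonneg (fun s _ => by positivity)]
      refine Finset.sum_congr rfl fun s _ => ?_
      rw [hPvol s, ENNReal.ofReal_mul (by positivity), mul_comm]
    · exact fun s _ => (measurable_const.indicator (hAmeas s))
  -- (II) the second-moment identity
  have hM : (∫ ω, ‖∑ i, ε i ω • x i‖ ^ 2) = ∑ s, P * c s ^ 2 := by
    have hcongr : (fun ω => ‖∑ i, ε i ω • x i‖ ^ 2)
        =ᵐ[volume] fun ω => ∑ s, Set.indicator (A s) (fun _ => c s ^ 2) ω := by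
      filter_upwards [hae] with ω hω
      obtain ⟨s, hs⟩ := Set.mem_iUnion.mp hω
      rw [Finset.sum_eq_single s]
      · rw [Set.indicator_of_mem hs, hval s ω hs]
      · intro s' _ hne
        rw [Set.indicator_of_notMem]
        intro hmem
        exact hne (hunique ω s' s hmem hs)
      · intro habs
        exact absurd (Finset.mem_univ s) habs
    rw [integral_congr_ae hcongr, integral_finset_sum]
    · refine Finset.sum_congr rfl fun s _ => ?_
      rw [integral_indicator_const _ (hAmeas s), measureReal_def, hPtoReal s, smul_eq_mul]
    · exact fun s _ => (integrable_const _).indicator (hAmeas s)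
  -- functionals are norm-bounded
  have hnormf : ∀ (f : B →L[ℝ] ℝ), f ∈ D → ∀ v : B, |f v| ≤ ‖v‖ := by
    intro f hf v
    calc |f v| = ‖f v‖ := (Real.norm_eq_abs _).symm
      _ ≤ ‖f‖ * ‖v‖ := f.le_opNorm v
      _ ≤ 1 * ‖v‖ := mul_le_mul_of_nonneg_right (hDball f hf) (norm_nonneg v)
      _ = ‖v‖ := one_mul _
  have hcnonneg : ∀ s, 0 ≤ c s := fun s => norm_nonneg _
  -- the key increment bound
  have hv : ∀ s : cube n, ∑ i : Fin n, (max (c s - c (CorA1.flip i s)) 0) ^ 2 ≤ 4 * σ ^ 2 := by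
    rcases D.eq_empty_or_nonempty with hDe | hDne
    · have hzero : ∀ v : B, ‖v‖ = 0 := by
        intro v
        rw [hnorming v, hDe, Set.image_empty, Real.sSup_empty]
      have hσ0 : σ = 0 := by rw [hσ, hDe, Set.image_empty, Real.sSup_empty]
      intro s
      have hterm : ∀ i : Fin n, (max (c s - c (CorA1.flip i s)) 0) ^ 2 = 0 := by
        intro i
        have h1 : c s = 0 := by rw [hc]; exact hzero _
        have h2 : c (CorA1.flip i s) = 0 := by rw [hc]; exact hzero _
        rw [h1, h2]
        norm_num
      rw [Finset.sum_congr rfl fun i _ => hterm i, Finset.sum_const, hσ0]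
      norm_num
    · intro s
      have hsqb : ∀ f ∈ D, Real.sqrt (∑ i, (f (x i)) ^ 2) ≤ Real.sqrt (∑ i, ‖x i‖ ^ 2) := by
        intro f hf
        apply Real.sqrt_le_sqrt
        refine Finset.sum_le_sum fun i _ => ?_
        have h1 := hnormf f hf (x i)
        nlinarith [abs_nonneg (f (x i)), sq_abs (f (x i))]
      have hbddσ : BddAbove ((fun f : B →L[ℝ] ℝ => Real.sqrt (∑ i, (f (x i)) ^ 2)) '' D) := by
        refine ⟨Real.sqrt (∑ i, ‖x i‖ ^ 2), ?_⟩
        rintro _ ⟨f, hf, rfl⟩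
        exact hsqb f hf
      have hσge : ∀ f ∈ D, Real.sqrt (∑ i, (f (x i)) ^ 2) ≤ σ := by
        intro f hf
        rw [hσ]
        exact le_csSup hbddσ ⟨f, hf, rfl⟩
      have hsumsq : ∀ f ∈ D, ∑ i, (f (x i)) ^ 2 ≤ σ ^ 2 := by
        intro f hf
        have h1 := hσge f hf
        have h2 : 0 ≤ ∑ i, (f (x i)) ^ 2 := Finset.sum_nonneg fun i _ => sq_nonneg _
        nlinarith [Real.sq_sqrt h2, Real.sqrt_nonneg (∑ i, (f (x i)) ^ 2)]
      have hkey : ∀ η : ℝ, 0 < η → η ≤ 1 →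
          ∑ i : Fin n, (max (c s - c (CorA1.flip i s)) 0) ^ 2
            ≤ 4 * σ ^ 2 + η * (4 * (∑ i, ‖x i‖) + n) := by
        intro η hη hη1
        have himgne : ((fun f : B →L[ℝ] ℝ => |f (y s)|) '' D).Nonempty := hDne.image _
        have hbddy : ∀ w : B, BddAbove ((fun f : B →L[ℝ] ℝ => |f w|) '' D) := by
          intro w
          refine ⟨‖w‖, ?_⟩
          rintro _ ⟨f, hf, rfl⟩
          exact hnormf f hf w
        obtain ⟨af, haf, hafgt⟩ : ∃ a ∈ (fun f : B →L[ℝ] ℝ => |f (y s)|) '' D, c s - η < a := by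
          apply (lt_csSup_iff (hbddy (y s)) himgne).mp
          rw [← hnorming (y s)]
          have hcy : c s = ‖y s‖ := by rw [hc]
          linarith
        obtain ⟨f, hfD, hfeq⟩ := haf
        -- flipped points
        have habs2 : ∀ i : Fin n, |2 * r s i| = 2 := by
          intro i
          rw [hr]
          rcases Bool.eq_false_or_eq_true (s i) with h | h <;> simp [h] <;> norm_num
        have hyflip : ∀ i : Fin n, y s - y (CorA1.flip i s) = (2 * r s i) • x i := by
          intro i
          have hrflip : ∀ i' : Fin n, r (CorA1.flip i s) i' = if i' = i then -(r s i) else r s i' := by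
            intro i'
            by_cases h : i' = i
            · subst h
              rw [if_pos rfl]
              have hupd : CorA1.flip i' s i' = !(s i') := Function.update_self _ _ _
              simp only [hr, hupd]
              rcases Bool.eq_false_or_eq_true (s i') with hb | hb <;> simp [hb]
            · rw [if_neg h]
              have hupd : CorA1.flip i s i' = s i' := Function.update_of_ne h _ _
              simp only [hr, hupd]
          rw [hy]
          simp only
          rw [← Finset.sum_sub_distrib]
          rw [Finset.sum_eq_single i]
          · rw [hrflip i, if_pos rfl, ← sub_smul]
            congr 1
            ring
          · intro i' _ hne
            rw [hrflip i', if_neg hne, sub_self]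
          · intro habs
            exact absurd (Finset.mem_univ i) habs
        have hib : ∀ i : Fin n, c s - c (CorA1.flip i s) ≤ 2 * |f (x i)| + η := by
          intro i
          have h1 : c s - η < |f (y s)| := by rw [← hfeq] at hafgt; simpa using hafgt
          have h2 : |f (y (CorA1.flip i s))| ≤ c (CorA1.flip i s) := by
            have : c (CorA1.flip i s) = ‖y (CorA1.flip i s)‖ := by rw [hc]
            rw [this, hnorming (y (CorA1.flip i s))]
            exact le_csSup (hbddy _) ⟨f, hfD, rfl⟩
          have h3 : |f (y s)| - |f (y (CorA1.flip i s))| ≤ |f (y s) - f (y (CorA1.flip i s))| :=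
            abs_sub_abs_le_abs_sub _ _
          have h4 : f (y s) - f (y (CorA1.flip i s)) = f (y s - y (CorA1.flip i s)) := (map_sub f _ _).symm
          have h5 : |f (y s - y (CorA1.flip i s))| = 2 * |f (x i)| := by
            rw [hyflip i, ContinuousLinearMap.map_smul, smul_eq_mul, abs_mul, habs2 i]
          rw [h4, h5] at h3
          linarith
        have hmaxb : ∀ i : Fin n, (max (c s - c (CorA1.flip i s)) 0) ^ 2
            ≤ (2 * |f (x i)| + η) ^ 2 := by
          intro i
          have h1 : max (c s - c (CorA1.flip i s)) 0 ≤ 2 * |f (x i)| + η :=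
            max_le (hib i) (by positivity)
          have h2 : (0:ℝ) ≤ max (c s - c (CorA1.flip i s)) 0 := le_max_right _ _
          nlinarith
        have e1 : ∑ i, (2 * |f (x i)| + η) ^ 2
            = 4 * (∑ i, (f (x i)) ^ 2) + 4 * η * (∑ i, |f (x i)|) + n * η ^ 2 := by
          have hterm : ∀ i : Fin n, (2 * |f (x i)| + η) ^ 2
              = 4 * (f (x i)) ^ 2 + 4 * η * |f (x i)| + η ^ 2 := by
            intro i
            rw [← sq_abs (f (x i))]
            ring
          rw [Finset.sum_congr rfl fun i _ => hterm i, Finset.sum_add_distrib,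
            Finset.sum_add_distrib, ← Finset.mul_sum, ← Finset.mul_sum, Finset.sum_const,
            Finset.card_univ, Fintype.card_fin, nsmul_eq_mul]
        have e2 : ∑ i, |f (x i)| ≤ ∑ i, ‖x i‖ :=
          Finset.sum_le_sum fun i _ => hnormf f hfD (x i)
        have e3 := hsumsq f hfD
        have e4 : (0:ℝ) ≤ ∑ i, |f (x i)| := Finset.sum_nonneg fun i _ => abs_nonneg _
        have e5 : (0:ℝ) ≤ (n:ℝ) := Nat.cast_nonneg n
        calc ∑ i : Fin n, (max (c s - c (CorA1.flip i s)) 0) ^ 2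
            ≤ ∑ i, (2 * |f (x i)| + η) ^ 2 := Finset.sum_le_sum fun i _ => hmaxb i
          _ ≤ 4 * σ ^ 2 + η * (4 * (∑ i, ‖x i‖) + n) := by
              rw [e1]
              have p1 : 4 * η * (∑ i, |f (x i)|) ≤ 4 * η * (∑ i, ‖x i‖) :=
                mul_le_mul_of_nonneg_left e2 (by positivity)
              have hη2 : η ^ 2 ≤ η := by nlinarith
              have p2 : (n:ℝ) * η ^ 2 ≤ η * n := by
                nlinarith [mul_le_mul_of_nonneg_left hη2 e5]
              have expand : η * (4 * (∑ i, ‖x i‖) + n) = 4 * η * (∑ i, ‖x i‖) + η * n := by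
                ring
              linarith [e3, p1, p2, expand.le, expand.ge]
      refine le_of_forall_pos_le_add fun δ hδ => ?_
      set C : ℝ := 4 * (∑ i, ‖x i‖) + n with hC
      have hC0 : 0 ≤ C := by positivity
      set η : ℝ := min 1 (δ / (C + 1)) with hηdef
      have hη0 : 0 < η := lt_min one_pos (by positivity)
      have hη1 : η ≤ 1 := min_le_left _ _
      have h := hkey η hη0 hη1
      have hηC : η * C ≤ δ := by
        have h1 : η ≤ δ / (C + 1) := min_le_right _ _
        rw [le_div_iff₀ (by linarith : (0:ℝ) < C + 1)] at h1
        nlinarith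
      linarith
  -- apply the cube MGF bound
  have hcube := cube_mgf (n := n) c (4 * σ ^ 2) lam hv hlam
  set m1 : ℝ := ∑ s, ((2:ℝ) ^ n)⁻¹ * c s with hm1
  set q2 : ℝ := ∑ s, P * c s ^ 2 with hq2
  have hPpos : 0 < P := by positivity
  have hm1nn : 0 ≤ m1 :=
    Finset.sum_nonneg fun s _ => mul_nonneg (by positivity) (hcnonneg s)
  have hq2nn : 0 ≤ q2 :=
    Finset.sum_nonneg fun s _ => mul_nonneg hPpos.le (sq_nonneg _)
  have hcs : m1 ^ 2 ≤ q2 := by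
    have hCS := Finset.sum_mul_sq_le_sq_mul_sq Finset.univ
      (fun _ : cube n => Real.sqrt P) (fun s => Real.sqrt P * c s)
    have hsq : Real.sqrt P ^ 2 = P := Real.sq_sqrt hPpos.le
    have ha : ∀ s : cube n, Real.sqrt P * (Real.sqrt P * c s) = P * c s := by
      intro s
      rw [← mul_assoc, Real.mul_self_sqrt hPpos.le]
    have hb : ∀ s : cube n, (Real.sqrt P * c s) ^ 2 = P * c s ^ 2 := by
      intro s
      rw [mul_pow, hsq]
    rw [Finset.sum_congr rfl fun s _ => ha s] at hCS
    rw [Finset.sum_congr rfl (fun s _ => hb s)] at hCS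
    have hone : ∑ _s : cube n, Real.sqrt P ^ 2 = 1 := by
      rw [Finset.sum_const, Finset.card_univ, nsmul_eq_mul, hsq]
      have hcard : Fintype.card (cube n) = 2 ^ n := by simp [cube]
      rw [hcard, hP]
      push_cast
      field_simp
    rw [hone, one_mul] at hCS
    calc m1 ^ 2 = (∑ s, P * c s) ^ 2 := by rw [hm1, hP]
      _ ≤ q2 := by rw [hq2]; exact hCS
  have hm1le : m1 ≤ Real.sqrt (2 * q2) := by
    calc m1 = Real.sqrt (m1 ^ 2) := (Real.sqrt_sq hm1nn).symm
      _ ≤ Real.sqrt (2 * q2) := Real.sqrt_le_sqrt (by linarith)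
  -- final chain
  rw [hL, hM]
  apply ENNReal.ofReal_le_ofReal
  calc ∑ s, P * Real.exp (lam * c s)
      = ∑ s, ((2:ℝ) ^ n)⁻¹ * Real.exp (lam * c s) := by rw [hP]
    _ ≤ Real.exp (lam * m1 + (4 * σ ^ 2) / 2 * lam ^ 2) := hcube
    _ ≤ 16 * Real.exp (lam * Real.sqrt (2 * q2) + 4 * (lam * σ) ^ 2) := by
        have h1 : lam * m1 ≤ lam * Real.sqrt (2 * q2) :=
          mul_le_mul_of_nonneg_left hm1le hlam.le
        have h2 : (4 * σ ^ 2) / 2 * lam ^ 2 ≤ 4 * (lam * σ) ^ 2 := by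
          nlinarith [sq_nonneg (lam * σ)]
        have h3 : Real.exp (lam * m1 + (4 * σ ^ 2) / 2 * lam ^ 2)
            ≤ Real.exp (lam * Real.sqrt (2 * q2) + 4 * (lam * σ) ^ 2) :=
          Real.exp_le_exp.2 (by linarith)
        nlinarith [Real.exp_pos (lam * Real.sqrt (2 * q2) + 4 * (lam * σ) ^ 2)]
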